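/- Let p and q be probability distributions on k elements with non-increasingly ordered entries such that p does not majorize q, and set δ* = 2 max_{l ∈ {1,…,k}} Σ_{i=1}^l (q_i − p_i). Then p majorizes the flattest δ*-approximation of q, i.e. p ≻ q̲^(δ*), and for every δ with 0 ≤ δ < δ* one has that p does not majorize q̲^(δ); that is, δ* is the minimal δ such that p ≻ q̲^(δ). -/
import Mathlib


open Finset

noncomputable section

/-- The ℓ¹ distance `‖a − b‖ = Σᵢ |aᵢ − bᵢ|` between two vectors in `ℝ^k`. -/
def l1dist {k : ℕ} (a b : Fin k → ℝ) : ℝ := ∑ i, |a i - b i|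

/-- A probability distribution on `k` elements: nonnegative entries summing to 1. -/
def IsProbDist {k : ℕ} (p : Fin k → ℝ) : Prop := (∀ i, 0 ≤ p i) ∧ ∑ i, p i = 1

/-- The vector `a` rearranged in non-increasing order, `a↓`. -/
def descSort {k : ℕ} (a : Fin k → ℝ) : Fin k → ℝ := fun i => a (Tuple.sort a i.rev)

/-- The sum of the first `l` entries of `a` (1-based indexing: entries `1,…,l`). -/
def psum {k : ℕ} (a : Fin k → ℝ) (l : ℕ) : ℝ :=
  ∑ i ∈ univ.filter (fun i : Fin k => (i : ℕ) < l), a i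

/-- The sum of the entries of `a` from position `l` to `k` (1-based indexing). -/
def tailSum {k : ℕ} (a : Fin k → ℝ) (l : ℕ) : ℝ :=
  ∑ i ∈ univ.filter (fun i : Fin k => l ≤ (i : ℕ) + 1), a i

/-- `a` majorizes `b` (`a ≻ b`): the total sums agree and all partial sums of the
non-increasing rearrangements satisfy `Σ_{i=1}^l a↓ᵢ ≥ Σ_{i=1}^l b↓ᵢ` for `l = 1,…,k`. -/
def Majorizes {k : ℕ} (a b : Fin k → ℝ) : Prop :=
  (∑ i, a i = ∑ i, b i) ∧
  ∀ l : ℕ, 1 ≤ l → l ≤ k → psum (descSort b) l ≤ psum (descSort a) l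

/-- The distribution `e₁ = (1,0,…,0)`. -/
def e1 (k : ℕ) : Fin k → ℝ := fun i => if (i : ℕ) = 0 then 1 else 0

/-- The uniform distribution `η = (1/k,…,1/k)`. -/
def unif (k : ℕ) : Fin k → ℝ := fun _ => (k : ℝ)⁻¹

/-- The unnormalised vector `r` in the construction of the steepest approximation:
`r₁ = p₁ + δ/2`, `rᵢ = pᵢ` otherwise. -/
def steepR {k : ℕ} (δ : ℝ) (p : Fin k → ℝ) : Fin k → ℝ :=
  fun i => if (i : ℕ) = 0 then p i + δ / 2 else p i

/-- `lstar ∈ {1,…,k}` is the truncation index of the steepest `δ`-approximation of `p`: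
`Σ_{i=1}^{l*} rᵢ ≤ 1 < Σ_{i=1}^{l*+1} rᵢ` (the second sum being meaningful for `l* < k`). -/
def IsTruncIdx {k : ℕ} (δ : ℝ) (p : Fin k → ℝ) (lstar : ℕ) : Prop :=
  1 ≤ lstar ∧ lstar ≤ k ∧ psum (steepR δ p) lstar ≤ 1 ∧
    (lstar < k → 1 < psum (steepR δ p) (lstar + 1))

/-- `pbar` is the steepest `δ`-approximation `p̄^(δ)` of `p` (assumed non-increasingly
ordered): if `‖p − e₁‖ ≤ δ` then `pbar = e₁`; otherwise `pbar` agrees with `r` on the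
first `l*` entries, has `1 − Σ_{i=1}^{l*} rᵢ` at position `l*+1`, and `0` afterwards. -/
def IsSteepest {k : ℕ} (δ : ℝ) (p pbar : Fin k → ℝ) : Prop :=
  (l1dist p (e1 k) ≤ δ ∧ pbar = e1 k) ∨
  (δ < l1dist p (e1 k) ∧ ∃ lstar : ℕ, IsTruncIdx δ p lstar ∧
    ∀ i : Fin k, pbar i =
      if (i : ℕ) < lstar then steepR δ p i
      else if (i : ℕ) = lstar then 1 - psum (steepR δ p) lstar
      else 0)

/-- `ε(x) = Σ_{i : pᵢ ≥ x} (pᵢ − x)`. -/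
def epsFn {k : ℕ} (p : Fin k → ℝ) (x : ℝ) : ℝ :=
  ∑ i ∈ univ.filter (fun i : Fin k => x ≤ p i), (p i - x)

/-- `γ(y) = Σ_{i : pᵢ ≤ y} (y − pᵢ)`. -/
def gammaFn {k : ℕ} (p : Fin k → ℝ) (y : ℝ) : ℝ :=
  ∑ i ∈ univ.filter (fun i : Fin k => p i ≤ y), (y - p i)

/-- `pflat` is the flattest `δ`-approximation of `p` built from the cutting level `x*` and
the filling level `y*`: `x*, y* ∈ [0,1]`, `ε(x*) = γ(y*) = δ/2`, and `pflat` equals `x*`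
where `pᵢ ≥ x*`, equals `y*` where `pᵢ ≤ y*`, and equals `pᵢ` otherwise. -/
def IsFlattestWith {k : ℕ} (δ : ℝ) (p pflat : Fin k → ℝ) (x y : ℝ) : Prop :=
  x ∈ Set.Icc (0 : ℝ) 1 ∧ y ∈ Set.Icc (0 : ℝ) 1 ∧
  epsFn p x = δ / 2 ∧ gammaFn p y = δ / 2 ∧
  ∀ i : Fin k, pflat i = if x ≤ p i then x else if p i ≤ y then y else p i

/-- `pflat` is the flattest `δ`-approximation `p̲^(δ)` of `p` (assumed non-increasingly
ordered): if `‖p − η‖ ≤ δ` then `pflat = η`; otherwise it is obtained by cutting at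
level `x*` and filling at level `y*`. -/
def IsFlattest {k : ℕ} (δ : ℝ) (p pflat : Fin k → ℝ) : Prop :=
  (l1dist p (unif k) ≤ δ ∧ pflat = unif k) ∨
  (δ < l1dist p (unif k) ∧ ∃ x y : ℝ, IsFlattestWith δ p pflat x y)

end

section AuxHelpers

variable {k : ℕ}

lemma psum_zero' (f : Fin k → ℝ) : psum f 0 = 0 := by simp [psum]

lemma psum_succ' (f : Fin k → ℝ) {l : ℕ} (h : l < k) :
    psum f (l + 1) = psum f l + f ⟨l, h⟩ := by
  unfold psum
  have hset : (univ.filter (fun i : Fin k => (i : ℕ) < l + 1))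
      = insert (⟨l, h⟩ : Fin k) (univ.filter (fun i : Fin k => (i : ℕ) < l)) := by
    ext i
    simp only [Finset.mem_filter, Finset.mem_univ, true_and, Finset.mem_insert, Fin.ext_iff]
    omega
  rw [hset, Finset.sum_insert (by simp)]
  ring

lemma psum_all' (f : Fin k → ℝ) {l : ℕ} (h : k ≤ l) : psum f l = ∑ i, f i := by
  unfold psum
  rw [Finset.filter_true_of_mem]
  intro i _
  exact lt_of_lt_of_le i.isLt h

lemma psum_congr' {f g : Fin k → ℝ} {l : ℕ} (h : ∀ i : Fin k, (i : ℕ) < l → f i = g i) :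
    psum f l = psum g l :=
  Finset.sum_congr rfl (fun i hi => h i (by simpa using hi))

lemma psum_const' {l : ℕ} (hl : l ≤ k) (c : ℝ) :
    psum (fun _ : Fin k => c) l = (l : ℝ) * c := by
  induction l with
  | zero => simp [psum_zero']
  | succ n ih =>
    have hn : n < k := Nat.lt_of_succ_le hl
    rw [psum_succ' _ hn, ih (le_of_lt hn)]
    push_cast
    ring

lemma psum_add' (f g : Fin k → ℝ) (l : ℕ) :
    psum (fun i => f i + g i) l = psum f l + psum g l :=
  Finset.sum_add_distrib

lemma psum_le_psum' {f g : Fin k → ℝ} (h : ∀ i, f i ≤ g i) (l : ℕ) :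
    psum f l ≤ psum g l :=
  Finset.sum_le_sum fun i _ => h i

lemma psum_nonneg' {f : Fin k → ℝ} (hf : ∀ i, 0 ≤ f i) (l : ℕ) : 0 ≤ psum f l :=
  Finset.sum_nonneg fun i _ => hf i

lemma psum_le_total' {f : Fin k → ℝ} (hf : ∀ i, 0 ≤ f i) (l : ℕ) :
    psum f l ≤ ∑ i, f i :=
  Finset.sum_le_sum_of_subset_of_nonneg (Finset.subset_univ _) (fun i _ _ => hf i)

lemma total_le_psum' {f : Fin k → ℝ} (hf : ∀ i, f i ≤ 0) (l : ℕ) :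
    ∑ i, f i ≤ psum f l := by
  have h1 : psum (fun i => -f i) l ≤ ∑ i, -f i :=
    psum_le_total' (fun i => neg_nonneg.2 (hf i)) l
  have h2 : psum (fun i => -f i) l = -psum f l := by
    unfold psum; rw [← Finset.sum_neg_distrib]
  rw [h2, Finset.sum_neg_distrib] at h1
  linarith

lemma psum_eq_total' {f : Fin k → ℝ} {l : ℕ} (h : ∀ i : Fin k, l ≤ (i : ℕ) → f i = 0) :
    psum f l = ∑ i, f i := by
  unfold psum
  apply Finset.sum_subset (Finset.subset_univ _)
  intro i _ hi
  exact h i (le_of_not_gt (by simpa using hi))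

lemma total_sub_psum_const' {f : Fin k → ℝ} {l : ℕ} {c : ℝ} (hl : l ≤ k)
    (h : ∀ i : Fin k, l ≤ (i : ℕ) → f i = c) :
    ∑ i, f i = psum f l + ((k : ℝ) - l) * c := by
  have h1 : psum (fun i => f i - c) l = psum f l - (l : ℝ) * c := by
    have := psum_add' (fun i => f i - c) (fun _ => c) l
    simp only [sub_add_cancel] at this
    rw [psum_const' hl] at this
    linarith
  have h2 : psum (fun i => f i - c) l = ∑ i, (f i - c) := by
    apply psum_eq_total'
    intro i hi
    rw [h i hi]; ring
  have h3 : ∑ i : Fin k, (f i - c) = (∑ i, f i) - (k : ℝ) * c := by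
    rw [Finset.sum_sub_distrib, Finset.sum_const, Finset.card_univ, Fintype.card_fin,
      nsmul_eq_mul]
  rw [h2, h3] at h1
  linarith

lemma psum_ge_mul' {f : Fin k → ℝ} {l : ℕ} {c : ℝ} (hl : l ≤ k)
    (h : ∀ i : Fin k, (i : ℕ) < l → c ≤ f i) : (l : ℝ) * c ≤ psum f l := by
  calc (l : ℝ) * c = psum (fun _ : Fin k => c) l := (psum_const' hl c).symm
  _ ≤ psum f l := Finset.sum_le_sum fun i hi => h i (by simpa using hi)

lemma psum_sub_le' {f : Fin k → ℝ} {l m : ℕ} {c : ℝ} (hlm : l ≤ m) (hm : m ≤ k)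
    (h : ∀ i : Fin k, l ≤ (i : ℕ) → (i : ℕ) < m → f i ≤ c) :
    psum f m - psum f l ≤ ((m : ℝ) - l) * c := by
  induction m, hlm using Nat.le_induction with
  | base => simp
  | succ n hn ih =>
    have hnk : n < k := Nat.lt_of_succ_le hm
    have h1 := ih (le_of_lt hnk) (fun i hi1 hi2 => h i hi1 (Nat.lt_succ_of_lt hi2))
    rw [psum_succ' f hnk]
    have hf : f ⟨n, hnk⟩ ≤ c := h _ hn (Nat.lt_succ_self n)
    push_cast
    linarith

lemma psum_sub_ge' {f : Fin k → ℝ} {l m : ℕ} {c : ℝ} (hlm : l ≤ m) (hm : m ≤ k)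
    (h : ∀ i : Fin k, l ≤ (i : ℕ) → (i : ℕ) < m → c ≤ f i) :
    ((m : ℝ) - l) * c ≤ psum f m - psum f l := by
  induction m, hlm using Nat.le_induction with
  | base => simp
  | succ n hn ih =>
    have hnk : n < k := Nat.lt_of_succ_le hm
    have h1 := ih (le_of_lt hnk) (fun i hi1 hi2 => h i hi1 (Nat.lt_succ_of_lt hi2))
    rw [psum_succ' f hnk]
    have hf : c ≤ f ⟨n, hnk⟩ := h _ hn (Nat.lt_succ_self n)
    push_cast
    linarith

lemma head_avg' {f : Fin k → ℝ} (hf : Antitone f) {l m : ℕ} (hl : 1 ≤ l) (hlm : l ≤ m)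
    (hm : m ≤ k) : (l : ℝ) * psum f m ≤ (m : ℝ) * psum f l := by
  rcases eq_or_lt_of_le hlm with rfl | hlt
  · exact le_rfl
  · have hlk : l < k := lt_of_lt_of_le hlt hm
    set j : Fin k := ⟨l - 1, by omega⟩ with hj
    have h1 : (l : ℝ) * f j ≤ psum f l := by
      apply psum_ge_mul' (le_of_lt hlk)
      intro i hi
      exact hf (by simp [hj, Fin.le_def]; omega)
    have h2 : psum f m - psum f l ≤ ((m : ℝ) - l) * f j := by
      apply psum_sub_le' hlm hm
      intro i hi1 hi2
      exact hf (by simp [hj, Fin.le_def]; omega)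
    have h3 : ((m : ℝ) - l) * ((l : ℝ) * f j) ≤ ((m : ℝ) - l) * psum f l :=
      mul_le_mul_of_nonneg_left h1 (sub_nonneg.mpr (Nat.cast_le.mpr hlm))
    have h4 : (l : ℝ) * (psum f m - psum f l) ≤ (l : ℝ) * (((m : ℝ) - l) * f j) :=
      mul_le_mul_of_nonneg_left h2 (by positivity)
    nlinarith [h3, h4]

lemma tail_avg' {f : Fin k → ℝ} (hf : Antitone f) {b l : ℕ} (hbl : b ≤ l) (hl : l < k) :
    ((k : ℝ) - b) * (psum f k - psum f l) ≤ ((k : ℝ) - l) * (psum f k - psum f b) := by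
  set j : Fin k := ⟨l, hl⟩ with hj
  have h1 : ((l : ℝ) - b) * f j ≤ psum f l - psum f b := by
    apply psum_sub_ge' hbl (le_of_lt hl)
    intro i hi1 hi2
    exact hf (by simp [hj, Fin.le_def]; omega)
  have h2 : psum f k - psum f l ≤ ((k : ℝ) - l) * f j := by
    apply psum_sub_le' (le_of_lt hl) le_rfl
    intro i hi1 hi2
    exact hf (by simp [hj, Fin.le_def]; omega)
  have hkl : (0 : ℝ) ≤ (k : ℝ) - l := by
    have : (l : ℝ) ≤ k := Nat.cast_le.mpr (le_of_lt hl)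
    linarith
  have hlb : (0 : ℝ) ≤ (l : ℝ) - b := by
    have : (b : ℝ) ≤ l := Nat.cast_le.mpr hbl
    linarith
  have h3 : ((k : ℝ) - l) * (((l : ℝ) - b) * f j) ≤ ((k : ℝ) - l) * (psum f l - psum f b) :=
    mul_le_mul_of_nonneg_left h1 hkl
  have h4 : ((l : ℝ) - b) * (psum f k - psum f l) ≤ ((l : ℝ) - b) * (((k : ℝ) - l) * f j) :=
    mul_le_mul_of_nonneg_left h2 hlb
  nlinarith [h3, h4]

lemma descSort_eq_self' {f : Fin k → ℝ} (hf : Antitone f) : descSort f = f := by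
  have hmono : Monotone (f ∘ ⇑(Fin.revPerm : Equiv.Perm (Fin k))) := by
    intro i j hij
    exact hf (by simpa using Fin.rev_le_rev.mpr hij)
  have hcomp := Tuple.comp_sort_eq_comp_iff_monotone.mpr hmono
  funext i
  have h1 : f (Fin.revPerm i.rev) = f (Tuple.sort f i.rev) := congrFun hcomp i.rev
  have h2 : (Fin.revPerm i.rev : Fin k) = i := by simp
  unfold descSort
  rw [← h1, h2]

lemma filter_eq_prefix' {P : Fin k → Prop} [DecidablePred P]
    (hdc : ∀ i j : Fin k, i ≤ j → P j → P i) (i : Fin k) :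
    P i ↔ (i : ℕ) < (univ.filter P).card := by
  constructor
  · intro hi
    have hsub : Finset.Iic i ⊆ univ.filter P := by
      intro j hj
      simp only [Finset.mem_filter, Finset.mem_univ, true_and]
      exact hdc j i (Finset.mem_Iic.mp hj) hi
    have hcard := Finset.card_le_card hsub
    rw [Fin.card_Iic] at hcard
    omega
  · intro hi
    by_contra hni
    have hsub : univ.filter P ⊆ Finset.Iio i := by
      intro j hj
      simp only [Finset.mem_filter, Finset.mem_univ, true_and] at hj
      rw [Finset.mem_Iio]
      by_contra hji
      exact hni (hdc i j (le_of_not_gt hji) hj)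
    have hcard := Finset.card_le_card hsub
    rw [Fin.card_Iio] at hcard
    omega

lemma epsFn_eq_max (q : Fin k → ℝ) (x : ℝ) : epsFn q x = ∑ i, max (q i - x) 0 := by
  unfold epsFn
  rw [Finset.sum_filter]
  apply Finset.sum_congr rfl
  intro i _
  rcases le_or_gt x (q i) with h | h
  · rw [if_pos h, max_eq_left (by linarith)]
  · rw [if_neg (not_le.mpr h), max_eq_right (by linarith)]

lemma gammaFn_eq_max (q : Fin k → ℝ) (y : ℝ) : gammaFn q y = ∑ i, max (y - q i) 0 := by
  unfold gammaFn
  rw [Finset.sum_filter]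
  apply Finset.sum_congr rfl
  intro i _
  rcases le_or_gt (q i) y with h | h
  · rw [if_pos h, max_eq_left (by linarith)]
  · rw [if_neg (not_le.mpr h), max_eq_right (by linarith)]

lemma epsFn_anti (q : Fin k → ℝ) {x x' : ℝ} (h : x ≤ x') : epsFn q x' ≤ epsFn q x := by
  rw [epsFn_eq_max, epsFn_eq_max]
  exact Finset.sum_le_sum fun i _ => max_le_max (by linarith) le_rfl

lemma gammaFn_mono (q : Fin k → ℝ) {y y' : ℝ} (h : y ≤ y') : gammaFn q y ≤ gammaFn q y' := by
  rw [gammaFn_eq_max, gammaFn_eq_max]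
  exact Finset.sum_le_sum fun i _ => max_le_max (by linarith) le_rfl

lemma eps_sub_gamma (q : Fin k → ℝ) (c : ℝ) :
    epsFn q c - gammaFn q c = (∑ i, q i) - (k : ℝ) * c := by
  rw [epsFn_eq_max, gammaFn_eq_max, ← Finset.sum_sub_distrib]
  have h1 : ∀ i : Fin k, max (q i - c) 0 - max (c - q i) 0 = q i - c := by
    intro i
    rcases le_total (q i) c with h | h
    · rw [max_eq_right (by linarith), max_eq_left (by linarith)]; ring
    · rw [max_eq_left (by linarith), max_eq_right (by linarith)]; ring
  rw [Finset.sum_congr rfl (fun i _ => h1 i), Finset.sum_sub_distrib, Finset.sum_const,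
    Finset.card_univ, Fintype.card_fin, nsmul_eq_mul]

lemma l1dist_unif_eq (q : Fin k → ℝ) :
    l1dist q (unif k) = epsFn q (k : ℝ)⁻¹ + gammaFn q (k : ℝ)⁻¹ := by
  unfold l1dist unif
  rw [epsFn_eq_max, gammaFn_eq_max, ← Finset.sum_add_distrib]
  apply Finset.sum_congr rfl
  intro i _
  rcases le_total (q i) ((k : ℝ)⁻¹) with h | h
  · rw [abs_of_nonpos (by linarith), max_eq_right (by linarith), max_eq_left (by linarith)]
    ring
  · rw [abs_of_nonneg (by linarith), max_eq_left (by linarith), max_eq_right (by linarith)]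
    ring

lemma flat_decomp' {q qf : Fin k → ℝ} {x y : ℝ} (hyx : y < x)
    (hqf : ∀ i, qf i = if x ≤ q i then x else if q i ≤ y then y else q i) (l : ℕ) :
    psum qf l = psum q l + psum (fun i => if x ≤ q i then x - q i else 0) l
      + psum (fun i => if q i ≤ y then y - q i else 0) l := by
  rw [← psum_add', ← psum_add']
  apply psum_congr'
  intro i _
  rw [hqf i]
  rcases le_or_gt x (q i) with h | h
  · rw [if_pos h, if_pos h, if_neg (by linarith)]; ring
  · rcases le_or_gt (q i) y with h2 | h2
    · rw [if_neg (not_le.mpr h), if_pos h2, if_neg (not_le.mpr h), if_pos h2]; ring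
    · rw [if_neg (not_le.mpr h), if_neg (not_le.mpr h2), if_neg (not_le.mpr h),
        if_neg (not_le.mpr h2)]; ring

lemma sum_d1_eq {q : Fin k → ℝ} (x : ℝ) :
    ∑ i, (if x ≤ q i then x - q i else 0) = -epsFn q x := by
  unfold epsFn
  rw [← Finset.sum_filter, ← Finset.sum_neg_distrib]
  apply Finset.sum_congr rfl
  intro i _
  ring

lemma sum_d2_eq {q : Fin k → ℝ} (y : ℝ) :
    ∑ i, (if q i ≤ y then y - q i else 0) = gammaFn q y := by
  unfold gammaFn
  rw [← Finset.sum_filter]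

end AuxHelpers

/-- if `p ⊁ q` then `δ* = 2 max_{1 ≤ l ≤ k} Σ_{i=1}^l (qᵢ − pᵢ)` is the
minimal `δ` such that `p` majorizes the flattest `δ`-approximation of `q`. -/
theorem min_delta_flattest {k : ℕ}
    (p q : Fin k → ℝ) (hp : IsProbDist p) (hq : IsProbDist q)
    (hpord : Antitone p) (hqord : Antitone q) (hnmaj : ¬ Majorizes p q)
    (δstar : ℝ)
    (hub : ∀ l : ℕ, 1 ≤ l → l ≤ k → 2 * (psum q l - psum p l) ≤ δstar)
    (hmem : ∃ l : ℕ, 1 ≤ l ∧ l ≤ k ∧ δstar = 2 * (psum q l - psum p l)) :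
    (∀ qflat : Fin k → ℝ, IsFlattest δstar q qflat → Majorizes p qflat) ∧
    (∀ δ : ℝ, 0 ≤ δ → δ < δstar →
      ∀ qflat : Fin k → ℝ, IsFlattest δ q qflat → ¬ Majorizes p qflat) := by
  obtain ⟨l₀, hl₀1, hl₀k, hl₀⟩ := hmem
  have hk : 0 < k := lt_of_lt_of_le hl₀1 hl₀k
  have hk0 : (0 : ℝ) < k := Nat.cast_pos.mpr hk
  have hdp : descSort p = p := descSort_eq_self' hpord
  have hpk : psum p k = 1 := by rw [psum_all' p le_rfl, hp.2]
  have hegamma : epsFn q (k : ℝ)⁻¹ = gammaFn q (k : ℝ)⁻¹ := by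
    have h := eps_sub_gamma q (k : ℝ)⁻¹
    rw [hq.2] at h
    have hkk : (k : ℝ) * (k : ℝ)⁻¹ = 1 := mul_inv_cancel₀ (ne_of_gt hk0)
    linarith
  have hL : l1dist q (unif k) = 2 * epsFn q (k : ℝ)⁻¹ := by
    rw [l1dist_unif_eq, ← hegamma]; ring
  constructor
  · -- direction 1
    intro qflat hflat
    rcases hflat with ⟨_, rfl⟩ | ⟨hlt, x, y, hx01, hy01, hex, hgy, hqf⟩
    · -- uniform case
      constructor
      · rw [hp.2]
        unfold unif
        rw [Finset.sum_const, Finset.card_univ, Fintype.card_fin, nsmul_eq_mul,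
          mul_inv_cancel₀ (ne_of_gt hk0)]
      · intro l hl1 hlk
        rw [hdp, descSort_eq_self' (fun _ _ _ => le_rfl)]
        have h1 : psum (unif k) l = (l : ℝ) * (k : ℝ)⁻¹ := psum_const' hlk _
        have h2 := head_avg' hpord hl1 hlk le_rfl
        rw [hpk] at h2
        rw [h1]
        calc (l : ℝ) * (k : ℝ)⁻¹ ≤ ((k : ℝ) * psum p l) * (k : ℝ)⁻¹ := by
              apply mul_le_mul_of_nonneg_right _ (inv_nonneg.mpr (le_of_lt hk0))
              linarith
          _ = psum p l := by field_simp
    · -- cut case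
      have hxk : (k : ℝ)⁻¹ < x := by
        by_contra hcon
        push_neg at hcon
        have hmono := epsFn_anti q hcon
        rw [hex, hL] at *
        linarith
      have hyk : y < (k : ℝ)⁻¹ := by
        by_contra hcon
        push_neg at hcon
        have hmono := gammaFn_mono q hcon
        rw [hgy] at hmono
        rw [hL, hegamma] at hlt
        linarith
      have hyx : y < x := lt_trans hyk hxk
      have hqfa : Antitone qflat := by
        intro i j hij
        have hq' : q j ≤ q i := hqord hij
        rw [hqf i, hqf j]
        split_ifs <;> linarith
      obtain ⟨A, hA, hAk⟩ : ∃ A : ℕ, (∀ i : Fin k, x ≤ q i ↔ (i : ℕ) < A) ∧ A ≤ k := by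
        refine ⟨(univ.filter (fun i : Fin k => x ≤ q i)).card,
          fun i => filter_eq_prefix' (fun i j hij hj => le_trans hj (hqord hij)) i, ?_⟩
        exact le_trans (Finset.card_filter_le _ _) (by simp)
      obtain ⟨B, hB, hBk⟩ : ∃ B : ℕ, (∀ i : Fin k, y < q i ↔ (i : ℕ) < B) ∧ B ≤ k := by
        refine ⟨(univ.filter (fun i : Fin k => y < q i)).card,
          fun i => filter_eq_prefix' (fun i j hij hj => lt_of_lt_of_le hj (hqord hij)) i, ?_⟩
        exact le_trans (Finset.card_filter_le _ _) (by simp)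
      have hAB : A ≤ B := by
        by_contra hcon
        push_neg at hcon
        have hBltk : B < k := lt_of_lt_of_le hcon hAk
        have h1 : x ≤ q ⟨B, hBltk⟩ := (hA _).mpr (by simpa using hcon)
        have h2 : y < q ⟨B, hBltk⟩ := lt_of_lt_of_le hyx h1
        have h3 := (hB _).mp h2
        simp at h3
      have hεA : psum q A - (A : ℝ) * x = δstar / 2 := by
        have hfe : (univ.filter (fun i : Fin k => x ≤ q i))
            = (univ.filter (fun i : Fin k => (i : ℕ) < A)) := by
          ext i
          simp only [Finset.mem_filter, Finset.mem_univ, true_and]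
          exact hA i
        have h1 : epsFn q x = psum (fun i => q i - x) A := by
          unfold epsFn psum
          rw [hfe]
        have h2 := psum_add' (fun i => q i - x) (fun _ => x) A
        simp only [sub_add_cancel] at h2
        rw [psum_const' hAk] at h2
        rw [hex] at h1
        linarith
      have hdec := flat_decomp' hyx hqf
      have hsum_qf : ∑ i, qflat i = 1 := by
        have h := hdec k
        rw [psum_all' _ le_rfl, psum_all' _ le_rfl, psum_all' _ le_rfl, psum_all' _ le_rfl] at h
        rw [h, sum_d1_eq, sum_d2_eq, hex, hgy, hq.2]
        ring
      have hmid : ∀ m : ℕ, 1 ≤ m → m ≤ k → A ≤ m → m ≤ B → psum qflat m ≤ psum p m := by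
        intro m hm1 hmk hAm hmB
        have hd1 : psum (fun i => if x ≤ q i then x - q i else 0) m = -epsFn q x := by
          have hz : ∀ i : Fin k, m ≤ (i : ℕ) → (if x ≤ q i then x - q i else 0) = 0 := by
            intro i hi
            rw [if_neg]
            intro hxi
            have := (hA i).mp hxi
            omega
          rw [psum_eq_total' hz, sum_d1_eq]
        have hd2 : psum (fun i => if q i ≤ y then y - q i else 0) m = 0 := by
          have hz : ∀ i : Fin k, (i : ℕ) < m →
              (if q i ≤ y then y - q i else 0) = (fun _ : Fin k => (0:ℝ)) i := by
            intro i hi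
            rw [if_neg (not_le.mpr ((hB i).mpr (lt_of_lt_of_le hi hmB)))]
          rw [psum_congr' hz, psum_const' hmk]
          simp
        have h := hdec m
        rw [hd1, hd2, hex] at h
        have hhub := hub m hm1 hmk
        linarith
      refine ⟨by rw [hp.2, hsum_qf], ?_⟩
      intro l hl1 hlk
      rw [hdp, descSort_eq_self' hqfa]
      rcases le_or_gt l A with hlA | hAl
      · -- top regime
        have h1 : psum qflat l = (l : ℝ) * x := by
          have hz : ∀ i : Fin k, (i : ℕ) < l → qflat i = (fun _ : Fin k => x) i := by
            intro i hi
            rw [hqf i, if_pos ((hA i).mpr (lt_of_lt_of_le hi hlA))]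
          rw [psum_congr' hz, psum_const' hlk]
        have hA1 : 1 ≤ A := le_trans hl1 hlA
        have hhub := hub A hA1 hAk
        have hkey : (A : ℝ) * x ≤ psum p A := by linarith
        have havg := head_avg' hpord hl1 hlA hAk
        have h2 : (l : ℝ) * ((A : ℝ) * x) ≤ (l : ℝ) * psum p A :=
          mul_le_mul_of_nonneg_left hkey (Nat.cast_nonneg l)
        have h3 : (A : ℝ) * ((l : ℝ) * x) ≤ (A : ℝ) * psum p l := by linarith
        have hA0 : (0 : ℝ) < A := by exact_mod_cast Nat.cast_pos.mpr hA1
        rw [h1]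
        exact le_of_mul_le_mul_left h3 hA0
      rcases le_or_gt l B with hlB | hBl
      · exact hmid l hl1 hlk (le_of_lt hAl) hlB
      · -- tail regime
        have hB1 : 1 ≤ B := by
          by_contra hcon
          push_neg at hcon
          have hally : ∀ i : Fin k, q i ≤ y := by
            intro i
            by_contra hqi
            have := (hB i).mp (not_le.mp hqi)
            omega
          have hsum_le : (1 : ℝ) ≤ (k : ℝ) * y := by
            have hss := Finset.sum_le_sum (fun i (_ : i ∈ (univ : Finset (Fin k))) => hally i)
            rw [hq.2, Finset.sum_const, Finset.card_univ, Fintype.card_fin, nsmul_eq_mul] at hss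
            exact hss
          have hky : (k : ℝ) * y < 1 := by
            have h2 : (k : ℝ) * y < (k : ℝ) * (k : ℝ)⁻¹ := mul_lt_mul_of_pos_left hyk hk0
            rwa [mul_inv_cancel₀ (ne_of_gt hk0)] at h2
          linarith
        have htail : ∀ i : Fin k, B ≤ (i : ℕ) → qflat i = y := by
          intro i hi
          have hqy : q i ≤ y := by
            by_contra hqi
            have := (hB i).mp (not_le.mp hqi)
            omega
          rw [hqf i, if_neg (by linarith), if_pos hqy]
        have hfB : ∑ i, qflat i = psum qflat B + ((k : ℝ) - B) * y :=
          total_sub_psum_const' hBk htail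
        have hfl : ∑ i, qflat i = psum qflat l + ((k : ℝ) - l) * y :=
          total_sub_psum_const' hlk (fun i hi => htail i (by omega))
        have hmidB : psum qflat B ≤ psum p B := hmid B hB1 hBk hAB le_rfl
        rcases eq_or_lt_of_le hlk with rfl | hlk'
        · rw [psum_all' _ le_rfl, hsum_qf, hpk]
        · have htav := tail_avg' hpord (le_of_lt hBl) hlk'
          rw [hpk] at htav
          have hkl0 : (0 : ℝ) ≤ (k : ℝ) - l := sub_nonneg.mpr (Nat.cast_le.mpr (le_of_lt hlk'))
          have hkB0 : (0 : ℝ) < (k : ℝ) - B := by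
            have hBk' : (B : ℝ) < k := Nat.cast_lt.mpr (by omega)
            linarith
          rw [hsum_qf] at hfB hfl
          have h5 : 1 - ((k : ℝ) - B) * y ≤ psum p B := by linarith
          have h6 : ((k : ℝ) - l) * (1 - psum p B) ≤ ((k : ℝ) - l) * (((k : ℝ) - B) * y) :=
            mul_le_mul_of_nonneg_left (by linarith) hkl0
          have h7 : ((k : ℝ) - B) * (1 - psum p l) ≤ ((k : ℝ) - B) * (((k : ℝ) - l) * y) := by
            nlinarith [htav, h6]
          have h8 : 1 - psum p l ≤ ((k : ℝ) - l) * y := le_of_mul_le_mul_left h7 hkB0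
          linarith
  · -- direction 2
    intro δ hδ0 hδlt qflat hflat hmaj
    rcases hflat with ⟨hle, rfl⟩ | ⟨hlt, x, y, hx01, hy01, hex, hgy, hqf⟩
    · -- uniform case
      have h := hmaj.2 l₀ hl₀1 hl₀k
      rw [hdp, descSort_eq_self' (fun _ _ _ => le_rfl)] at h
      have hu : psum (unif k) l₀ = (l₀ : ℝ) * (k : ℝ)⁻¹ := psum_const' hl₀k _
      rw [hu] at h
      have hb1 : psum q l₀ - (l₀ : ℝ) * (k : ℝ)⁻¹ ≤ epsFn q (k : ℝ)⁻¹ := by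
        have h1 : psum (fun i => q i - (k : ℝ)⁻¹) l₀
            ≤ psum (fun i => max (q i - (k : ℝ)⁻¹) 0) l₀ :=
          psum_le_psum' (fun i => le_max_left _ _) l₀
        have h2 : psum (fun i => max (q i - (k : ℝ)⁻¹) 0) l₀
            ≤ ∑ i, max (q i - (k : ℝ)⁻¹) 0 :=
          psum_le_total' (fun i => le_max_right _ _) l₀
        have h3 : psum (fun i => q i - (k : ℝ)⁻¹) l₀ = psum q l₀ - (l₀ : ℝ) * (k : ℝ)⁻¹ := by
          have h4 := psum_add' (fun i => q i - (k : ℝ)⁻¹) (fun _ => (k : ℝ)⁻¹) l₀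
          simp only [sub_add_cancel] at h4
          rw [psum_const' hl₀k] at h4
          linarith
        rw [epsFn_eq_max]
        linarith
      rw [hL] at hle
      linarith
    · -- cut case
      have hxk : (k : ℝ)⁻¹ < x := by
        by_contra hcon
        push_neg at hcon
        have hmono := epsFn_anti q hcon
        rw [hex] at hmono
        rw [hL] at hlt
        linarith
      have hyk : y < (k : ℝ)⁻¹ := by
        by_contra hcon
        push_neg at hcon
        have hmono := gammaFn_mono q hcon
        rw [hgy] at hmono
        rw [hL, hegamma] at hlt
        linarith
      have hyx : y < x := lt_trans hyk hxk
      have hqfa : Antitone qflat := by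
        intro i j hij
        have hq' : q j ≤ q i := hqord hij
        rw [hqf i, hqf j]
        split_ifs <;> linarith
      have h := hmaj.2 l₀ hl₀1 hl₀k
      rw [hdp, descSort_eq_self' hqfa] at h
      have hdec := flat_decomp' hyx hqf l₀
      have hd1 : -epsFn q x ≤ psum (fun i => if x ≤ q i then x - q i else 0) l₀ := by
        rw [← sum_d1_eq (q := q) x]
        apply total_le_psum'
        intro i
        rcases le_or_gt x (q i) with hxi | hxi
        · rw [if_pos hxi]; linarith
        · rw [if_neg (not_le.mpr hxi)]
      have hd2 : 0 ≤ psum (fun i => if q i ≤ y then y - q i else 0) l₀ := by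
        apply psum_nonneg'
        intro i
        rcases le_or_gt (q i) y with hyi | hyi
        · rw [if_pos hyi]; linarith
        · rw [if_neg (not_le.mpr hyi)]
      rw [hex] at hd1
      linarith
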